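/- Let n ≥ 1, l ≥ 1, let |·| be a norm on ℂ^n, and let C > 0 be a constant such that: for every power bounded linear operator T on (ℂ^n, |·|) with σ(T) ⊂ 𝔻 and every λ⋆ ∈ ℂ with |λ⋆| = 1, one has dist(λ⋆, σ(T))^l · ‖R^l(λ⋆, T)‖ ≤ C · P(T). Then ρ^{strong,l}(T) ≤ C · P(T) for every power bounded linear operator T on (ℂ^n, |·|). -/

import Mathlib

open Metric Filter Topology Pointwise

/-- Lower bound for `infDist` over a nonempty set. -/
lemma aux_le_infDist {s : Set ℂ} (hs : s.Nonempty) {x : ℂ} {b : ℝ}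
    (h : ∀ y ∈ s, b ≤ dist x y) : b ≤ Metric.infDist x s := by
  by_contra hb
  push_neg at hb
  obtain ⟨y, hy, hxy⟩ := (Metric.infDist_lt_iff hs).mp hb
  exact absurd hxy (not_lt.2 (h y hy))

/-- Scaling a point and a set scales the infimal distance. -/
lemma aux_infDist_smul (c : ℂ) (hc : c ≠ 0) (x : ℂ) (A : Set ℂ) :
    Metric.infDist (c • x) (c • A) = ‖c‖ * Metric.infDist x A := by
  rcases A.eq_empty_or_nonempty with rfl | hA
  · simp [Metric.infDist_empty]
  have hcpos : 0 < ‖c‖ := norm_pos_iff.mpr hc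
  apply le_antisymm
  · have key : Metric.infDist (c • x) (c • A) / ‖c‖ ≤ Metric.infDist x A := by
      refine aux_le_infDist hA fun a ha => ?_
      have h1 : Metric.infDist (c • x) (c • A) ≤ ‖c‖ * dist x a := by
        have h2 := dist_smul₀ c x a
        calc Metric.infDist (c • x) (c • A) ≤ dist (c • x) (c • a) :=
              Metric.infDist_le_dist_of_mem (Set.smul_mem_smul_set ha)
          _ = ‖c‖ * dist x a := h2
      rw [div_le_iff₀ hcpos]
      linarith [h1]
    calc Metric.infDist (c • x) (c • A)
        = Metric.infDist (c • x) (c • A) / ‖c‖ * ‖c‖ :=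
          (div_mul_cancel₀ _ hcpos.ne').symm
      _ ≤ Metric.infDist x A * ‖c‖ := mul_le_mul_of_nonneg_right key hcpos.le
      _ = ‖c‖ * Metric.infDist x A := mul_comm _ _
  · refine aux_le_infDist (hA.smul_set) fun b hb => ?_
    obtain ⟨a, ha, rfl⟩ := hb
    rw [dist_smul₀]
    exact mul_le_mul_of_nonneg_left (Metric.infDist_le_dist_of_mem ha) hcpos.le

lemma aux_isUnit_smul {A : Type*} [Ring A] [Algebra ℂ A] {c : ℂ} (hc : c ≠ 0)
    {U : A} (h : IsUnit U) : IsUnit (c • U) := by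
  obtain ⟨u, rfl⟩ := h
  refine ⟨⟨c • ↑u, c⁻¹ • ↑u⁻¹, ?_, ?_⟩, rfl⟩
  · rw [smul_mul_smul_comm, mul_inv_cancel₀ hc, u.mul_inv, one_smul]
  · rw [smul_mul_smul_comm, inv_mul_cancel₀ hc, u.inv_mul, one_smul]

/-- `Ring.inverse` of a scalar multiple. -/
lemma aux_inverse_smul {A : Type*} [Ring A] [Algebra ℂ A] (c : ℂ) (hc : c ≠ 0) (U : A) :
    Ring.inverse (c • U) = c⁻¹ • Ring.inverse U := by
  by_cases h : IsUnit U
  · obtain ⟨u, rfl⟩ := h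
    have h1 : (c • (u : A)) * (c⁻¹ • ↑u⁻¹) = 1 := by
      rw [smul_mul_smul_comm, mul_inv_cancel₀ hc, u.mul_inv, one_smul]
    have h2 : (c⁻¹ • (↑u⁻¹ : A)) * (c • ↑u) = 1 := by
      rw [smul_mul_smul_comm, inv_mul_cancel₀ hc, u.inv_mul, one_smul]
    let u' : Aˣ := ⟨c • ↑u, c⁻¹ • ↑u⁻¹, h1, h2⟩
    have e1 : Ring.inverse (c • (u : A)) = (↑u'⁻¹ : A) := Ring.inverse_unit u'
    rw [e1, Ring.inverse_unit]
    rfl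
  · have h' : ¬ IsUnit (c • U) := by
      intro hcU
      apply h
      have := aux_isUnit_smul (inv_ne_zero hc) hcU
      rwa [smul_smul, inv_mul_cancel₀ hc, one_smul] at this
    rw [Ring.inverse_non_unit _ h, Ring.inverse_non_unit _ h', smul_zero]

set_option maxHeartbeats 2000000 in
/-- maximum principle. Suppose `C > 0` is such that for every power
bounded operator `T` on `(ℂⁿ, |·|)` with `σ(T) ⊂ 𝔻` and every `|λ⋆| = 1`,
`dist(λ⋆, σ(T))^l ‖R^l(λ⋆,T)‖ ≤ C · P(T)`. Then `ρ^{strong,l}(T) ≤ C · P(T)` for every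
power bounded `T` on `(ℂⁿ, |·|)`, i.e. `dist(z,σ(T))^l ‖R^l(z,T)‖ ≤ C · P(T)` for all
`|z| ≥ 1`, `z ∉ σ(T)`. -/
theorem strong_iterated_maximum_principle
    (n l : ℕ) (hn : 1 ≤ n) (hl : 1 ≤ l)
    (E : Type) [NormedAddCommGroup E] [NormedSpace ℂ E]
    (hdim : Module.finrank ℂ E = n)
    (C : ℝ) (hC : 0 < C)
    (hyp : ∀ T : E →L[ℂ] E, (∃ c : ℝ, ∀ k : ℕ, ‖T ^ k‖ ≤ c) →
      spectrum ℂ T ⊆ Metric.ball (0 : ℂ) 1 →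
      ∀ lamstar : ℂ, ‖lamstar‖ = 1 →
        Metric.infDist lamstar (spectrum ℂ T) ^ l *
            ‖(Ring.inverse (algebraMap ℂ (E →L[ℂ] E) lamstar - T)) ^ l‖
          ≤ C * (⨆ k : ℕ, ‖T ^ k‖)) :
    ∀ T : E →L[ℂ] E, (∃ c : ℝ, ∀ k : ℕ, ‖T ^ k‖ ≤ c) →
      ∀ z : ℂ, 1 ≤ ‖z‖ → z ∉ spectrum ℂ T →
        Metric.infDist z (spectrum ℂ T) ^ l *
            ‖(Ring.inverse (algebraMap ℂ (E →L[ℂ] E) z - T)) ^ l‖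
          ≤ C * (⨆ k : ℕ, ‖T ^ k‖) := by
  intro T hpb z hz hzspec
  obtain ⟨c, hc⟩ := hpb
  have hfinpos : 0 < Module.finrank ℂ E := by rw [hdim]; omega
  haveI : FiniteDimensional ℂ E := FiniteDimensional.of_finrank_pos hfinpos
  haveI : CompleteSpace E := FiniteDimensional.complete ℂ E
  haveI : Nontrivial E := Module.nontrivial_of_finrank_pos hfinpos
  -- basic facts about the spectrum
  have hAne : (spectrum ℂ T).Nonempty := spectrum.nonempty T
  have hAcp : IsCompact (spectrum ℂ T) := spectrum.isCompact T
  -- spectral radius bound from power boundedness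
  have hspec1 : ∀ μ ∈ spectrum ℂ T, ‖μ‖ ≤ 1 := by
    intro μ hμ
    by_contra hgt
    push_neg at hgt
    have hk : ∀ k : ℕ, ‖μ‖ ^ k ≤ c := by
      intro k
      have hmem : μ ^ k ∈ spectrum ℂ (T ^ k) := by
        have hsub := spectrum.subset_polynomial_aeval T ((Polynomial.X : Polynomial ℂ) ^ k)
        have h1 : μ ^ k ∈ (fun x => Polynomial.eval x ((Polynomial.X : Polynomial ℂ) ^ k)) ''
            spectrum ℂ T := ⟨μ, hμ, by simp⟩
        have := hsub h1
        simpa using this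
      calc ‖μ‖ ^ k = ‖μ ^ k‖ := (norm_pow μ k).symm
        _ ≤ ‖T ^ k‖ := spectrum.norm_le_norm_of_mem hmem
        _ ≤ c := hc k
    obtain ⟨k, hk'⟩ :=
      ((tendsto_pow_atTop_atTop_of_one_lt hgt).eventually_ge_atTop (c + 1)).exists
    linarith [hk k]
  -- notation
  set r : ℝ := ‖z‖ with hr
  have hr1 : 1 ≤ r := hz
  have hr0 : (0 : ℝ) < r := lt_of_lt_of_le one_pos hr1
  have hrne : (r : ℂ) ≠ 0 := by
    simp only [ne_eq, Complex.ofReal_eq_zero]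
    exact hr0.ne'
  have hbdd : BddAbove (Set.range fun k : ℕ => ‖T ^ k‖) := by
    refine ⟨c, ?_⟩
    rintro _ ⟨k, rfl⟩
    exact hc k
  set P : ℝ := ⨆ k : ℕ, ‖T ^ k‖ with hP
  -- the function we take the limit of
  set g : ℝ → ℝ := fun t =>
    Metric.infDist z ((t : ℂ) • spectrum ℂ T) ^ l *
      ‖(Ring.inverse (algebraMap ℂ (E →L[ℂ] E) z - (t : ℂ) • T)) ^ l‖ with hg
  -- Step A: bound on Ioo 0 1
  have stepA : ∀ t ∈ Set.Ioo (0 : ℝ) 1, g t ≤ C * P := by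
    intro t ht
    obtain ⟨ht0, ht1⟩ := ht
    set s : ℂ := (t : ℂ) / (r : ℂ) with hs
    have hsne : s ≠ 0 := by
      apply div_ne_zero _ hrne
      simp only [ne_eq, Complex.ofReal_eq_zero]
      exact ht0.ne'
    have hsnorm : ‖s‖ = t / r := by
      rw [hs, norm_div]
      simp [Complex.norm_real, Real.norm_eq_abs, abs_of_pos ht0, abs_of_pos hr0]
    have hslt : ‖s‖ < 1 := by
      rw [hsnorm]
      calc t / r ≤ t := div_le_self ht0.le hr1
        _ < 1 := ht1
    set S : E →L[ℂ] E := s • T with hS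
    -- power bounded
    have hSpow : ∀ k : ℕ, ‖S ^ k‖ ≤ ‖T ^ k‖ := by
      intro k
      have h2 : ‖s ^ k • T ^ k‖ = ‖s ^ k‖ * ‖T ^ k‖ := norm_smul (s ^ k) (T ^ k)
      rw [hS, smul_pow, h2, norm_pow]
      calc ‖s‖ ^ k * ‖T ^ k‖ ≤ 1 * ‖T ^ k‖ := by
            apply mul_le_mul_of_nonneg_right _ (norm_nonneg _)
            exact pow_le_one₀ (norm_nonneg s) hslt.le
        _ = ‖T ^ k‖ := one_mul _
    have hSpb : ∃ c' : ℝ, ∀ k : ℕ, ‖S ^ k‖ ≤ c' := ⟨c, fun k => (hSpow k).trans (hc k)⟩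
    -- spectrum of S
    haveI : Nontrivial (E →L[ℂ] E) := by
      obtain ⟨x, hx⟩ := exists_ne (0 : E)
      refine ⟨1, 0, fun h => hx ?_⟩
      have := DFunLike.congr_fun h x
      simpa using this
    have hSspec : spectrum ℂ S = s • spectrum ℂ T := spectrum.smul_eq_smul s T hAne
    have hSball : spectrum ℂ S ⊆ Metric.ball (0 : ℂ) 1 := by
      intro w hw
      rw [hSspec] at hw
      obtain ⟨μ, hμ, rfl⟩ := hw
      rw [Metric.mem_ball, dist_zero_right]
      calc ‖s • μ‖ = ‖s‖ * ‖μ‖ := norm_smul s μ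
        _ ≤ ‖s‖ * 1 := mul_le_mul_of_nonneg_left (hspec1 μ hμ) (norm_nonneg s)
        _ = ‖s‖ := mul_one _
        _ < 1 := hslt
    -- the unimodular point
    set lam : ℂ := z / (r : ℂ) with hlam
    have hlamabs : ‖lam‖ = 1 := by
      rw [hlam, norm_div]
      simp only [Complex.norm_real, Real.norm_eq_abs, abs_of_pos hr0]
      rw [← hr]
      field_simp
    have hmain := hyp S hSpb hSball lam hlamabs
    -- rewrite the left-hand side
    have hsetsmul : spectrum ℂ S = ((r : ℂ))⁻¹ • ((t : ℂ) • spectrum ℂ T) := by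
      rw [hSspec, smul_smul, hs, div_eq_mul_inv, mul_comm]
    have hlamsmul : lam = ((r : ℂ))⁻¹ • z := by
      rw [hlam, smul_eq_mul, div_eq_mul_inv, mul_comm]
    have hdisteq : Metric.infDist lam (spectrum ℂ S) =
        r⁻¹ * Metric.infDist z ((t : ℂ) • spectrum ℂ T) := by
      rw [hsetsmul, hlamsmul, aux_infDist_smul _ (inv_ne_zero hrne)]
      congr 1
      rw [norm_inv, Complex.norm_real, Real.norm_eq_abs, abs_of_pos hr0]
    have hopeq : algebraMap ℂ (E →L[ℂ] E) lam - S =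
        ((r : ℂ))⁻¹ • (algebraMap ℂ (E →L[ℂ] E) z - (t : ℂ) • T) := by
      rw [smul_sub, smul_smul]
      congr 1
      · rw [hlam, div_eq_mul_inv, mul_comm, map_mul, Algebra.smul_def]
      · rw [hS, hs, div_eq_mul_inv, mul_comm]
    have hinveq : Ring.inverse (algebraMap ℂ (E →L[ℂ] E) lam - S) =
        (r : ℂ) • Ring.inverse (algebraMap ℂ (E →L[ℂ] E) z - (t : ℂ) • T) := by
      rw [hopeq, aux_inverse_smul _ (inv_ne_zero hrne), inv_inv]
    have hnormeq : ‖(Ring.inverse (algebraMap ℂ (E →L[ℂ] E) lam - S)) ^ l‖ =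
        r ^ l * ‖(Ring.inverse (algebraMap ℂ (E →L[ℂ] E) z - (t : ℂ) • T)) ^ l‖ := by
      have h3 : ‖((r : ℂ) ^ l) • (Ring.inverse (algebraMap ℂ (E →L[ℂ] E) z - (t : ℂ) • T)) ^ l‖
          = ‖(r : ℂ) ^ l‖ * ‖(Ring.inverse (algebraMap ℂ (E →L[ℂ] E) z - (t : ℂ) • T)) ^ l‖ :=
        norm_smul (α := ℂ) (β := E →L[ℂ] E) ((r : ℂ) ^ l)
          ((Ring.inverse (algebraMap ℂ (E →L[ℂ] E) z - (t : ℂ) • T)) ^ l)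
      rw [hinveq, smul_pow, h3, norm_pow, Complex.norm_real, Real.norm_eq_abs, abs_of_pos hr0]
    have hLHS : Metric.infDist lam (spectrum ℂ S) ^ l *
        ‖(Ring.inverse (algebraMap ℂ (E →L[ℂ] E) lam - S)) ^ l‖ = g t := by
      rw [hdisteq, hnormeq, hg]
      dsimp only
      rw [mul_pow]
      have hrl : r⁻¹ ^ l * (Metric.infDist z ((t : ℂ) • spectrum ℂ T) ^ l) *
            (r ^ l * ‖(Ring.inverse (algebraMap ℂ (E →L[ℂ] E) z - (t : ℂ) • T)) ^ l‖)
          = (r⁻¹ ^ l * r ^ l) * (Metric.infDist z ((t : ℂ) • spectrum ℂ T) ^ l *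
            ‖(Ring.inverse (algebraMap ℂ (E →L[ℂ] E) z - (t : ℂ) • T)) ^ l‖) := by ring
      rw [hrl, ← mul_pow, inv_mul_cancel₀ hr0.ne', one_pow, one_mul]
    -- rewrite the right-hand side
    have hRHS : (⨆ k : ℕ, ‖S ^ k‖) ≤ P := by
      refine ciSup_le fun k => ?_
      exact (hSpow k).trans (le_ciSup hbdd k)
    calc g t = Metric.infDist lam (spectrum ℂ S) ^ l *
          ‖(Ring.inverse (algebraMap ℂ (E →L[ℂ] E) lam - S)) ^ l‖ := hLHS.symm
      _ ≤ C * (⨆ k : ℕ, ‖S ^ k‖) := hmain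
      _ ≤ C * P := mul_le_mul_of_nonneg_left hRHS hC.le
  -- Step B: the limit
  set L : ℝ := Metric.infDist z (spectrum ℂ T) ^ l *
      ‖(Ring.inverse (algebraMap ℂ (E →L[ℂ] E) z - T)) ^ l‖ with hL
  have hunit : IsUnit (algebraMap ℂ (E →L[ℂ] E) z - T) := spectrum.notMem_iff.mp hzspec
  obtain ⟨u, hu⟩ := hunit
  -- continuity of the resolvent factor
  have hbase : Continuous fun t : ℝ => algebraMap ℂ (E →L[ℂ] E) z - (t : ℂ) • T :=
    continuous_const.sub (Complex.continuous_ofReal.smul continuous_const)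
  have h2 : Tendsto (fun t : ℝ => ‖(Ring.inverse (algebraMap ℂ (E →L[ℂ] E) z - (t : ℂ) • T)) ^ l‖)
      (nhdsWithin 1 (Set.Iio 1)) (nhds ‖(Ring.inverse (algebraMap ℂ (E →L[ℂ] E) z - T)) ^ l‖) := by
    have hc0 : Tendsto (fun t : ℝ => algebraMap ℂ (E →L[ℂ] E) z - (t : ℂ) • T) (nhds 1)
        (nhds (algebraMap ℂ (E →L[ℂ] E) z - T)) := by
      have := hbase.tendsto 1
      simpa using this
    have hinvc : ContinuousAt (Ring.inverse : (E →L[ℂ] E) → (E →L[ℂ] E))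
        (algebraMap ℂ (E →L[ℂ] E) z - T) := by
      rw [← hu]
      exact NormedRing.inverse_continuousAt u
    have hc1 : Tendsto (fun t : ℝ => Ring.inverse (algebraMap ℂ (E →L[ℂ] E) z - (t : ℂ) • T))
        (nhds 1) (nhds (Ring.inverse (algebraMap ℂ (E →L[ℂ] E) z - T))) := by
      have := hinvc.tendsto.comp hc0
      exact this
    have hc2 := (hc1.pow l).norm
    exact hc2.mono_left nhdsWithin_le_nhds
  -- continuity of the distance factor
  obtain ⟨a₀, ha₀, ha₀d⟩ := hAcp.exists_infDist_eq_dist hAne z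
  have h1 : Tendsto (fun t : ℝ => Metric.infDist z ((t : ℂ) • spectrum ℂ T))
      (nhdsWithin 1 (Set.Iio 1)) (nhds (Metric.infDist z (spectrum ℂ T))) := by
    set d : ℝ := Metric.infDist z (spectrum ℂ T) with hd
    have hlow : Tendsto (fun t : ℝ => d - (1 - t)) (nhdsWithin 1 (Set.Iio 1)) (nhds d) := by
      have h4 : Tendsto (fun t : ℝ => d - (1 - t)) (nhds 1) (nhds (d - (1 - 1))) :=
        tendsto_const_nhds.sub (tendsto_const_nhds.sub tendsto_id)
      have := h4.mono_left (nhdsWithin_le_nhds (s := Set.Iio (1:ℝ)))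
      simpa using this
    have hup : Tendsto (fun t : ℝ => d + (1 - t)) (nhdsWithin 1 (Set.Iio 1)) (nhds d) := by
      have h4 : Tendsto (fun t : ℝ => d + (1 - t)) (nhds 1) (nhds (d + (1 - 1))) :=
        tendsto_const_nhds.add (tendsto_const_nhds.sub tendsto_id)
      have := h4.mono_left (nhdsWithin_le_nhds (s := Set.Iio (1:ℝ)))
      simpa using this
    refine tendsto_of_tendsto_of_tendsto_of_le_of_le' hlow hup ?_ ?_
    · filter_upwards [Ioo_mem_nhdsLT_of_mem (by constructor <;> norm_num :
        (1 : ℝ) ∈ Set.Ioc (0 : ℝ) 1)] with t ht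
      obtain ⟨ht0, ht1⟩ := ht
      refine aux_le_infDist (hAne.smul_set) fun b hb => ?_
      obtain ⟨a, ha, rfl⟩ := hb
      have htri : dist z a ≤ dist z ((t : ℂ) • a) + dist ((t : ℂ) • a) a := dist_triangle _ _ _
      have hda : dist ((t : ℂ) • a) a = (1 - t) * ‖a‖ := by
        rw [dist_eq_norm]
        have h5 : (t : ℂ) • a - a = -((((1 - t : ℝ)) : ℂ) * a) := by
          rw [smul_eq_mul]
          push_cast
          ring
        rw [h5, norm_neg, norm_mul, Complex.norm_real, Real.norm_eq_abs,
          abs_of_pos (by linarith : (0:ℝ) < 1 - t)]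
      have hanorm : ‖a‖ ≤ 1 := hspec1 a ha
      have hdz : d ≤ dist z a := Metric.infDist_le_dist_of_mem ha
      have h6 : dist ((t : ℂ) • a) a ≤ 1 - t := by
        rw [hda]
        calc (1 - t) * ‖a‖ ≤ (1 - t) * 1 :=
              mul_le_mul_of_nonneg_left hanorm (by linarith)
          _ = 1 - t := mul_one _
      linarith
    · filter_upwards [Ioo_mem_nhdsLT_of_mem (by constructor <;> norm_num :
        (1 : ℝ) ∈ Set.Ioc (0 : ℝ) 1)] with t ht
      obtain ⟨ht0, ht1⟩ := ht
      have hmem : (t : ℂ) • a₀ ∈ (t : ℂ) • spectrum ℂ T := Set.smul_mem_smul_set ha₀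
      have hda : dist a₀ ((t : ℂ) • a₀) = (1 - t) * ‖a₀‖ := by
        rw [dist_eq_norm]
        have h5 : a₀ - (t : ℂ) • a₀ = (((1 - t : ℝ)) : ℂ) * a₀ := by
          rw [smul_eq_mul]
          push_cast
          ring
        rw [h5, norm_mul, Complex.norm_real, Real.norm_eq_abs,
          abs_of_pos (by linarith : (0:ℝ) < 1 - t)]
      have hanorm : ‖a₀‖ ≤ 1 := hspec1 a₀ ha₀
      calc Metric.infDist z ((t : ℂ) • spectrum ℂ T) ≤ dist z ((t : ℂ) • a₀) :=
            Metric.infDist_le_dist_of_mem hmem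
        _ ≤ dist z a₀ + dist a₀ ((t : ℂ) • a₀) := dist_triangle _ _ _
        _ ≤ d + (1 - t) := by
            rw [hda, ← ha₀d]
            have h7 : (1 - t) * ‖a₀‖ ≤ 1 - t := by
              calc (1 - t) * ‖a₀‖ ≤ (1 - t) * 1 :=
                    mul_le_mul_of_nonneg_left hanorm (by linarith)
                _ = 1 - t := mul_one _
            linarith
  -- conclude
  have htend : Tendsto g (nhdsWithin 1 (Set.Iio 1)) (nhds L) := by
    rw [hg, hL]
    exact (h1.pow l).mul h2
  have hev : ∀ᶠ t in nhdsWithin (1 : ℝ) (Set.Iio 1), g t ≤ C * P := by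
    filter_upwards [Ioo_mem_nhdsLT_of_mem (by constructor <;> norm_num :
      (1 : ℝ) ∈ Set.Ioc (0 : ℝ) 1)] with t ht
    exact stepA t ht
  exact le_of_tendsto htend hev
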